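/- Let X be a complex normed vector space, T a bounded linear operator on X with Banach-space adjoint T* acting on the dual X*, and x ∈ X ∖ {0}. Suppose ℓ ∈ X* is a norming functional for x, i.e. ‖ℓ‖ = 1 and ℓ(x) = ‖x‖, and suppose ℓ(Tᵏ x) = 0 for all k ≥ 1. Then ℓ is T*-inner in the Birkhoff–James sense: for every k ≥ 1 and every β ∈ ℂ, ‖ℓ + β (T*)ᵏ ℓ‖ ≥ ‖ℓ‖. -/

import Mathlib

/-- Proposition 7.2: if `ℓ` is a norming functional for `x` and `ℓ(Tᵏx) = 0` for all
`k ≥ 1` (i.e. `x` is `T`-inner), then `ℓ` is `T*`-inner in the Birkhoff–James sense,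
where `T*` is the Banach-space adjoint, `(T*ℓ)(y) = ℓ(Ty)`. -/
theorem stmt17 {X : Type*} [NormedAddCommGroup X] [NormedSpace ℂ X]
    (T : X →L[ℂ] X)
    (Tstar : (X →L[ℂ] ℂ) →L[ℂ] (X →L[ℂ] ℂ))
    (hTstar : ∀ (ℓ : X →L[ℂ] ℂ) (y : X), Tstar ℓ y = ℓ (T y))
    (x : X) (hx : x ≠ 0)
    (ℓ : X →L[ℂ] ℂ) (hℓ : ‖ℓ‖ = 1) (hℓx : ℓ x = (‖x‖ : ℂ))
    (h : ∀ k : ℕ, 1 ≤ k → ℓ ((T ^ k) x) = 0) :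
    ∀ k : ℕ, 1 ≤ k → ∀ β : ℂ, ‖ℓ‖ ≤ ‖ℓ + β • (Tstar ^ k) ℓ‖ := by
  have key : ∀ (k : ℕ) (ℓ' : X →L[ℂ] ℂ) (y : X), (Tstar ^ k) ℓ' y = ℓ' ((T ^ k) y) := by
    intro k
    induction k with
    | zero => intro ℓ' y; set_option synthInstance.maxHeartbeats 400000 in simp
    | succ n ih =>
      intro ℓ' y
      set_option synthInstance.maxHeartbeats 400000 in rw [pow_succ, pow_succ']
      simp only [ContinuousLinearMap.mul_apply]
      rw [ih (Tstar ℓ') y, hTstar]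
  intro k hk β
  have hxn : (0:ℝ) < ‖x‖ := norm_pos_iff.mpr hx
  have heval : (ℓ + β • (Tstar ^ k) ℓ) x = (‖x‖ : ℂ) := by
    simp only [ContinuousLinearMap.add_apply, ContinuousLinearMap.smul_apply, key k ℓ x,
      h k hk, smul_zero, add_zero, hℓx]
  have hle : ‖x‖ ≤ ‖ℓ + β • (Tstar ^ k) ℓ‖ * ‖x‖ := by
    calc ‖x‖ = ‖(ℓ + β • (Tstar ^ k) ℓ) x‖ := by rw [heval]; simp
    _ ≤ ‖ℓ + β • (Tstar ^ k) ℓ‖ * ‖x‖ := (ℓ + β • (Tstar ^ k) ℓ).le_opNorm x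
  rw [hℓ]
  nlinarith
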